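/- Let f be a concave function and g a positive convex function on a convex compact set Q, with max_Q f ≥ 0. Then q* maximizes the ratio f/g over Q if and only if q* maximizes f(q) − π*·g(q) over Q, where π* = f(q*)/g(q*); moreover the maximum of f(q) − π*·g(q) over Q equals 0. -/

import Mathlib

/-- Dinkelbach characterization: `q*` maximizes `f/g` over `Q` iff it maximizes
`f − π* g` over `Q` with `π* = f(q*)/g(q*)`, and in that case the maximum of
`f − π* g` over `Q` equals `0`. -/
theorem stmt_4 (n : ℕ) (Q : Set (Fin n → ℝ)) (hQne : Q.Nonempty)
    (hQconv : Convex ℝ Q) (hQcomp : IsCompact Q)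
    (f g : (Fin n → ℝ) → ℝ)
    (hf : ConcaveOn ℝ Q f) (hg : ConvexOn ℝ Q g)
    (hgpos : ∀ q ∈ Q, 0 < g q)
    (hfmax : ∃ q ∈ Q, 0 ≤ f q)
    (qs : Fin n → ℝ) (hqs : qs ∈ Q) :
    ((∀ q ∈ Q, f q / g q ≤ f qs / g qs) ↔
      (∀ q ∈ Q, f q - (f qs / g qs) * g q ≤ f qs - (f qs / g qs) * g qs)) ∧
    ((∀ q ∈ Q, f q / g q ≤ f qs / g qs) →
      IsGreatest ((fun q => f q - (f qs / g qs) * g q) '' Q) 0) := by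

  have hgqs := hgpos qs hqs
  have hzero : f qs - (f qs / g qs) * g qs = 0 := by
    field_simp
    ring
  have key : ∀ q ∈ Q, (f q / g q ≤ f qs / g qs ↔
      f q - (f qs / g qs) * g q ≤ 0) := by
    intro q hq
    have hgq := hgpos q hq
    rw [sub_nonpos, div_le_div_iff₀ hgq hgqs, div_mul_eq_mul_div,
      le_div_iff₀ hgqs]
  constructor
  · constructor
    · intro h q hq
      rw [hzero]
      exact (key q hq).mp (h q hq)
    · intro h q hq
      exact (key q hq).mpr (by have := h q hq; linarith [hzero])
  · intro h
    refine ⟨⟨qs, hqs, hzero⟩, ?_⟩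
    rintro x ⟨q, hq, rfl⟩
    exact (key q hq).mp (h q hq)
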